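/- Assume f is irreducible. If there exists a nonzero prolongation A of f (with some character χ), then there exists w ∈ Ŷ with f_{ww} ≠ 0 such that the Gauss space Γ_w has dimension at least 2 (equivalently, Γ_w strictly contains the line ℂ·w); this is the algebraic form of the statement that the Gauss map of the cubic hypersurface Y is degenerate. -/

import Mathlib

set_option linter.unusedSectionVars false
set_option maxHeartbeats 2000000

open MvPolynomial

namespace GaussAux

variable {W : Type*} [AddCommGroup W] [Module ℂ W]

theorem trilinear_eq_zero_of_diag (f : W →ₗ[ℂ] W →ₗ[ℂ] W →ₗ[ℂ] ℂ)
    (hsym1 : ∀ u v w : W, f u v w = f v u w)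
    (hsym2 : ∀ u v w : W, f u v w = f u w v)
    (hdiag : ∀ w : W, f w w w = 0) : f = 0 := by
  have h1 : ∀ u v : W, f u u v + f u v v = 0 := by
    intro u v
    have h := hdiag (u + v)
    simp only [map_add, LinearMap.add_apply] at h
    have e1 : f u v u = f u u v := by rw [hsym2]
    have e2 : f v u u = f u u v := by rw [hsym1, hsym2]
    have e3 : f v u v = f u v v := by rw [hsym1]
    have e4 : f v v u = f u v v := by rw [hsym2 v v u, hsym1]
    rw [hdiag u, hdiag v, e1, e2, e3, e4] at h
    linear_combination h / 3
  have huuv : ∀ u v : W, f u u v = 0 := by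
    intro u v
    have h2 := h1 u ((2:ℂ) • v)
    simp only [map_smul, LinearMap.smul_apply, smul_eq_mul] at h2
    linear_combination 2 * h1 u v - h2 / 2
  ext u v w
  have h := huuv (u + v) w
  simp only [map_add, LinearMap.add_apply] at h
  rw [huuv u w, huuv v w, hsym1 v u w] at h
  simpa using by linear_combination h / 2

theorem bilinear_eq_zero_of_diag (A : W →ₗ[ℂ] W →ₗ[ℂ] W)
    (hAsym : ∀ u v : W, A u v = A v u)
    (hdiag : ∀ w : W, A w w = 0) : A = 0 := by
  ext u v
  have h := hdiag (u + v)
  simp only [map_add, LinearMap.add_apply] at h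
  rw [hdiag u, hdiag v, hAsym v u] at h
  have h2 : (2:ℂ) • A u v = 0 := by rw [two_smul]; simpa using h
  simpa using (smul_eq_zero.mp h2).resolve_left (by norm_num)

variable {W : Type*} [AddCommGroup W] [Module ℂ W] {n : ℕ}

noncomputable def pol2 (c : Fin n → Fin n → ℂ) : MvPolynomial (Fin n) ℂ :=
  ∑ i, ∑ j, C (c i j) * X i * X j

noncomputable def pol3 (c : Fin n → Fin n → Fin n → ℂ) : MvPolynomial (Fin n) ℂ :=
  ∑ i, ∑ j, ∑ k, C (c i j k) * X i * X j * X k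

theorem pol2_isHomogeneous (c : Fin n → Fin n → ℂ) : (pol2 c).IsHomogeneous 2 := by
  apply IsHomogeneous.sum
  intro i _
  apply IsHomogeneous.sum
  intro j _
  have : (2:ℕ) = 0 + 1 + 1 := rfl
  rw [this]
  exact ((isHomogeneous_C _ _).mul (isHomogeneous_X _ _)).mul (isHomogeneous_X _ _)

theorem pol3_isHomogeneous (c : Fin n → Fin n → Fin n → ℂ) : (pol3 c).IsHomogeneous 3 := by
  apply IsHomogeneous.sum; intro i _
  apply IsHomogeneous.sum; intro j _
  apply IsHomogeneous.sum; intro k _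
  have : (3:ℕ) = 0 + 1 + 1 + 1 := rfl
  rw [this]
  exact (((isHomogeneous_C _ _).mul (isHomogeneous_X _ _)).mul (isHomogeneous_X _ _)).mul
    (isHomogeneous_X _ _)

theorem eval_pol2 (b : Module.Basis (Fin n) ℂ W) (B : W →ₗ[ℂ] W →ₗ[ℂ] ℂ)
    (hB : ∀ u v : W, B u v = B v u) (w : W) :
    eval (b.equivFun w) (pol2 (fun i j => B (b i) (b j))) = B w w := by
  conv_rhs => rw [← b.sum_repr w]
  simp only [pol2, map_sum, LinearMap.sum_apply, map_smul, LinearMap.smul_apply, smul_eq_mul,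
    eval_mul, eval_C, eval_X, Module.Basis.equivFun_apply]
  simp only [Finset.mul_sum]
  apply Finset.sum_congr rfl; intro i _
  apply Finset.sum_congr rfl; intro j _
  rw [hB (b j) (b i)]
  ring

theorem eval_pol3 (b : Module.Basis (Fin n) ℂ W) (f : W →ₗ[ℂ] W →ₗ[ℂ] W →ₗ[ℂ] ℂ)
    (hsym1 : ∀ u v w : W, f u v w = f v u w)
    (hsym2 : ∀ u v w : W, f u v w = f u w v) (w : W) :
    eval (b.equivFun w) (pol3 (fun i j k => f (b i) (b j) (b k))) = f w w w := by
  conv_rhs => rw [← b.sum_repr w]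
  simp only [pol3, map_sum, LinearMap.sum_apply, map_smul, LinearMap.smul_apply, smul_eq_mul,
    eval_mul, eval_C, eval_X, Module.Basis.equivFun_apply, Finset.mul_sum]
  apply Finset.sum_congr rfl; intro i _
  apply Finset.sum_congr rfl; intro j _
  apply Finset.sum_congr rfl; intro k _
  rw [show f (b k) (b j) (b i) = f (b i) (b j) (b k) by rw [hsym1, hsym2, hsym1]]
  ring

variable {σ : Type*} [Fintype σ] [DecidableEq σ]

theorem hc_mul_homog (q t : MvPolynomial σ ℂ) {dq m : ℕ} (hq : q.IsHomogeneous dq) :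
    homogeneousComponent m (q * t) =
      if dq ≤ m then q * homogeneousComponent (m - dq) t else 0 := by
  conv_lhs => rw [← sum_homogeneousComponent t]
  rw [Finset.mul_sum, map_sum]
  have hterm : ∀ i : ℕ, homogeneousComponent m (q * homogeneousComponent i t)
      = if m = dq + i then q * homogeneousComponent i t else 0 := by
    intro i
    exact homogeneousComponent_of_mem
      ((mem_homogeneousSubmodule _ _).mpr (hq.mul (homogeneousComponent_isHomogeneous i t)))
  simp only [hterm]
  by_cases hdq : dq ≤ m
  · rw [if_pos hdq]
    rw [Finset.sum_eq_single (m - dq)]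
    · rw [if_pos (by omega)]
    · intro i _ hi
      rw [if_neg (by omega)]
    · intro hnot
      rw [if_pos (by omega)]
      rw [homogeneousComponent_eq_zero _ t (by simp at hnot; omega), mul_zero]
  · rw [if_neg hdq]
    apply Finset.sum_eq_zero
    intro i _
    rw [if_neg (by omega)]

theorem degree_structure_one (d : σ →₀ ℕ) (h : d.degree = 1) :
    ∃ a, d = Finsupp.single a 1 := by
  have hcard : Multiset.card (Finsupp.toMultiset d) = 1 := by
    rw [Finsupp.card_toMultiset]
    simpa [Finsupp.degree_apply, Finsupp.sum] using h
  obtain ⟨a, ha⟩ := Multiset.card_eq_one.mp hcard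
  refine ⟨a, ?_⟩
  have := congrArg Multiset.toFinsupp ha
  rwa [Finsupp.toMultiset_toFinsupp, Multiset.toFinsupp_singleton] at this

theorem degree_structure_two (d : σ →₀ ℕ) (h : d.degree = 2) :
    ∃ a c, d = Finsupp.single a 1 + Finsupp.single c 1 := by
  have hcard : Multiset.card (Finsupp.toMultiset d) = 2 := by
    rw [Finsupp.card_toMultiset]
    simpa [Finsupp.degree_apply, Finsupp.sum] using h
  obtain ⟨a, c, hac⟩ := Multiset.card_eq_two.mp hcard
  refine ⟨a, c, ?_⟩
  have := congrArg Multiset.toFinsupp hac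
  rw [Finsupp.toMultiset_toFinsupp] at this
  rw [this, show ({a, c} : Multiset σ) = {a} + {c} by rfl, map_add,
    Multiset.toFinsupp_singleton, Multiset.toFinsupp_singleton]

theorem prod_single_one (x : σ → ℂ) (a : σ) :
    (Finsupp.single a 1).prod (fun i k => x i ^ k) = x a := by
  rw [Finsupp.prod_single_index (by simp)]
  simp

theorem prod_pair (x : σ → ℂ) (a c : σ) :
    (Finsupp.single a 1 + Finsupp.single c 1).prod (fun i k => x i ^ k) = x a * x c := by
  rw [Finsupp.prod_add_index (by simp) (by intros; rw [pow_add])]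
  rw [prod_single_one, prod_single_one]

variable {σ : Type*} [Fintype σ] [DecidableEq σ]

theorem hc_prod_formula (P Q : MvPolynomial σ ℂ) (m : ℕ) :
    homogeneousComponent m (P * Q) =
      ∑ i ∈ Finset.range (P.totalDegree + 1), ∑ j ∈ Finset.range (Q.totalDegree + 1),
        if m = i + j then homogeneousComponent i P * homogeneousComponent j Q else 0 := by
  conv_lhs => rw [← sum_homogeneousComponent P, ← sum_homogeneousComponent Q]
  rw [Finset.sum_mul_sum, map_sum]
  apply Finset.sum_congr rfl
  intro i _
  rw [map_sum]
  apply Finset.sum_congr rfl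
  intro j _
  exact homogeneousComponent_of_mem ((mem_homogeneousSubmodule _ _).mpr
    ((homogeneousComponent_isHomogeneous i P).mul (homogeneousComponent_isHomogeneous j Q)))

theorem homog_factors {G P Q : MvPolynomial σ ℂ} (hG3 : G.IsHomogeneous 3) (hG0 : G ≠ 0)
    (hPQ : G = P * Q) (hP : ¬ IsUnit P) (hQ : ¬ IsUnit Q) :
    ∃ a b : ℕ, P.IsHomogeneous a ∧ Q.IsHomogeneous b ∧ 1 ≤ a ∧ 1 ≤ b ∧ a + b = 3 := by
  classical
  have hP0 : P ≠ 0 := fun h => hG0 (by rw [hPQ, h, zero_mul])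
  have hQ0 : Q ≠ 0 := fun h => hG0 (by rw [hPQ, h, mul_zero])
  set SP := (Finset.range (P.totalDegree + 1)).filter
    (fun i => homogeneousComponent i P ≠ 0) with hSP
  set SQ := (Finset.range (Q.totalDegree + 1)).filter
    (fun i => homogeneousComponent i Q ≠ 0) with hSQ
  have hSPne : SP.Nonempty := by
    by_contra h
    apply hP0
    rw [← sum_homogeneousComponent P]
    apply Finset.sum_eq_zero
    intro i hi
    by_contra hne
    exact h ⟨i, Finset.mem_filter.mpr ⟨hi, hne⟩⟩
  have hSQne : SQ.Nonempty := by
    by_contra h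
    apply hQ0
    rw [← sum_homogeneousComponent Q]
    apply Finset.sum_eq_zero
    intro i hi
    by_contra hne
    exact h ⟨i, Finset.mem_filter.mpr ⟨hi, hne⟩⟩
  have hPz : ∀ i : ℕ, i ∉ SP → homogeneousComponent i P = 0 := by
    intro i hi
    by_cases hr : i ∈ Finset.range (P.totalDegree + 1)
    · by_contra hne; exact hi (Finset.mem_filter.mpr ⟨hr, hne⟩)
    · exact homogeneousComponent_eq_zero _ P (by simp at hr; omega)
  have hQz : ∀ i : ℕ, i ∉ SQ → homogeneousComponent i Q = 0 := by
    intro i hi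
    by_cases hr : i ∈ Finset.range (Q.totalDegree + 1)
    · by_contra hne; exact hi (Finset.mem_filter.mpr ⟨hr, hne⟩)
    · exact homogeneousComponent_eq_zero _ Q (by simp at hr; omega)
  have hGc : ∀ m : ℕ, homogeneousComponent m G = if m = 3 then G else 0 := fun m =>
    homogeneousComponent_of_mem ((mem_homogeneousSubmodule _ _).mpr hG3)
  have hmemP : ∀ i : ℕ, homogeneousComponent i P ≠ 0 → i ∈ SP := by
    intro i hi
    by_contra h
    exact hi (hPz i h)
  have hmemQ : ∀ i : ℕ, homogeneousComponent i Q ≠ 0 → i ∈ SQ := by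
    intro i hi
    by_contra h
    exact hi (hQz i h)
  have prod_comp : ∀ a b : ℕ,
      (∀ i j : ℕ, i + j = a + b → ¬(i = a ∧ j = b) →
        homogeneousComponent i P = 0 ∨ homogeneousComponent j Q = 0) →
      homogeneousComponent (a + b) G =
        homogeneousComponent a P * homogeneousComponent b Q := by
    intro a b hext
    rw [hPQ, hc_prod_formula]
    have hinner : ∀ i ∈ Finset.range (P.totalDegree + 1), i ≠ a →
        (∑ j ∈ Finset.range (Q.totalDegree + 1),
          if a + b = i + j then homogeneousComponent i P * homogeneousComponent j Q else 0) = 0 := by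
      intro i _ hia
      apply Finset.sum_eq_zero
      intro j _
      by_cases hc : a + b = i + j
      · rw [if_pos hc]
        rcases hext i j hc.symm (fun h => hia h.1) with h | h
        · rw [h, zero_mul]
        · rw [h, mul_zero]
      · rw [if_neg hc]
    rw [Finset.sum_eq_single a _ _]
    · rw [Finset.sum_eq_single b _ _]
      · rw [if_pos rfl]
      · intro j _ hjb
        rw [if_neg (by omega)]
      · intro hb
        rw [if_pos rfl, homogeneousComponent_eq_zero _ Q (by simp at hb; omega), mul_zero]
    · exact hinner
    · intro ha
      apply Finset.sum_eq_zero
      intro j _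
      by_cases hc : a + b = a + j
      · rw [if_pos hc, homogeneousComponent_eq_zero _ P (by simp at ha; omega), zero_mul]
      · rw [if_neg hc]
  obtain ⟨a, haSP⟩ := hSPne.exists_mem
  set amax := SP.max' hSPne with hamax
  set amin := SP.min' hSPne with hamin
  set bmax := SQ.max' hSQne with hbmax
  set bmin := SQ.min' hSQne with hbmin
  have hPamax : homogeneousComponent amax P ≠ 0 := (Finset.mem_filter.mp (SP.max'_mem hSPne)).2
  have hPamin : homogeneousComponent amin P ≠ 0 := (Finset.mem_filter.mp (SP.min'_mem hSPne)).2
  have hQbmax : homogeneousComponent bmax Q ≠ 0 := (Finset.mem_filter.mp (SQ.max'_mem hSQne)).2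
  have hQbmin : homogeneousComponent bmin Q ≠ 0 := (Finset.mem_filter.mp (SQ.min'_mem hSQne)).2
  have hmax3 : amax + bmax = 3 := by
    have h := prod_comp amax bmax (by
      intro i j hij hne
      by_contra hcon
      push_neg at hcon
      obtain ⟨h1, h2⟩ := hcon
      have hi : i ≤ amax := SP.le_max' i (hmemP i h1)
      have hj : j ≤ bmax := SQ.le_max' j (hmemQ j h2)
      exact hne ⟨by omega, by omega⟩)
    by_contra hne3
    rw [hGc, if_neg hne3] at h
    exact mul_ne_zero hPamax hQbmax h.symm
  have hmin3 : amin + bmin = 3 := by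
    have h := prod_comp amin bmin (by
      intro i j hij hne
      by_contra hcon
      push_neg at hcon
      obtain ⟨h1, h2⟩ := hcon
      have hi : amin ≤ i := SP.min'_le i (hmemP i h1)
      have hj : bmin ≤ j := SQ.min'_le j (hmemQ j h2)
      exact hne ⟨by omega, by omega⟩)
    by_contra hne3
    rw [hGc, if_neg hne3] at h
    exact mul_ne_zero hPamin hQbmin h.symm
  have haeq : amin = amax := by
    have h1 : amin ≤ amax := SP.min'_le _ (SP.max'_mem hSPne)
    have h2 : bmin ≤ bmax := SQ.min'_le _ (SQ.max'_mem hSQne)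
    omega
  have hbeq : bmin = bmax := by
    have h1 : amin ≤ amax := SP.min'_le _ (SP.max'_mem hSPne)
    have h2 : bmin ≤ bmax := SQ.min'_le _ (SQ.max'_mem hSQne)
    omega
  have hPhom : P = homogeneousComponent amax P := by
    conv_lhs => rw [← sum_homogeneousComponent P]
    rw [Finset.sum_eq_single amax _ _]
    · intro i hi hia
      apply hPz
      intro hiSP
      exact hia (le_antisymm (SP.le_max' i hiSP) (haeq ▸ SP.min'_le i hiSP))
    · intro h
      exact absurd (Finset.mem_of_mem_filter amax (SP.max'_mem hSPne)) h
  have hQhom : Q = homogeneousComponent bmax Q := by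
    conv_lhs => rw [← sum_homogeneousComponent Q]
    rw [Finset.sum_eq_single bmax _ _]
    · intro i hi hib
      apply hQz
      intro hiSQ
      exact hib (le_antisymm (SQ.le_max' i hiSQ) (hbeq ▸ SQ.min'_le i hiSQ))
    · intro h
      exact absurd (Finset.mem_of_mem_filter bmax (SQ.max'_mem hSQne)) h
  have hPH : P.IsHomogeneous amax := hPhom ▸ homogeneousComponent_isHomogeneous amax P
  have hQH : Q.IsHomogeneous bmax := hQhom ▸ homogeneousComponent_isHomogeneous bmax Q
  have ha1 : 1 ≤ amax := by
    by_contra h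
    have ha0 : amax = 0 := by omega
    apply hP
    rw [hPhom, ha0, homogeneousComponent_zero]
    have : coeff 0 P ≠ 0 := by
      intro hc
      apply hP0
      rw [hPhom, ha0, homogeneousComponent_zero, hc, map_zero]
    exact this.isUnit.map (C : ℂ →+* MvPolynomial σ ℂ)
  have hb1 : 1 ≤ bmax := by
    by_contra h
    have hb0 : bmax = 0 := by omega
    apply hQ
    rw [hQhom, hb0, homogeneousComponent_zero]
    have : coeff 0 Q ≠ 0 := by
      intro hc
      apply hQ0
      rw [hQhom, hb0, homogeneousComponent_zero, hc, map_zero]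
    exact this.isUnit.map (C : ℂ →+* MvPolynomial σ ℂ)
  exact ⟨amax, bmax, hPH, hQH, ha1, hb1, hmax3⟩

theorem prod_single_one' {σ : Type*} (x : σ → ℂ) (a : σ) :
    (Finsupp.single a 1).prod (fun i k => x i ^ k) = x a := by
  rw [Finsupp.prod_single_index (by simp)]
  simp

theorem prod_pair' {σ : Type*} [DecidableEq σ] (x : σ → ℂ) (a c : σ) :
    (Finsupp.single a 1 + Finsupp.single c 1).prod (fun i k => x i ^ k) = x a * x c := by
  classical
  rw [Finsupp.prod_add_index (by simp) (by intros; rw [pow_add])]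
  rw [prod_single_one', prod_single_one']

theorem degree_structure_one' {σ : Type*} [DecidableEq σ] (d : σ →₀ ℕ) (h : d.degree = 1) :
    ∃ a, d = Finsupp.single a 1 := by
  have hcard : Multiset.card (Finsupp.toMultiset d) = 1 := by
    rw [Finsupp.card_toMultiset]
    simpa [Finsupp.degree_apply, Finsupp.sum] using h
  obtain ⟨a, ha⟩ := Multiset.card_eq_one.mp hcard
  refine ⟨a, ?_⟩
  have := congrArg Multiset.toFinsupp ha
  rwa [Finsupp.toMultiset_toFinsupp, Multiset.toFinsupp_singleton] at this

theorem degree_structure_two' {σ : Type*} [DecidableEq σ] (d : σ →₀ ℕ) (h : d.degree = 2) :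
    ∃ a c, d = Finsupp.single a 1 + Finsupp.single c 1 := by
  have hcard : Multiset.card (Finsupp.toMultiset d) = 2 := by
    rw [Finsupp.card_toMultiset]
    simpa [Finsupp.degree_apply, Finsupp.sum] using h
  obtain ⟨a, c, hac⟩ := Multiset.card_eq_two.mp hcard
  refine ⟨a, c, ?_⟩
  have h2 := congrArg Multiset.toFinsupp hac
  rw [Finsupp.toMultiset_toFinsupp] at h2
  rw [h2, show ({a, c} : Multiset σ) = {a} + {c} by rfl, map_add,
    Multiset.toFinsupp_singleton, Multiset.toFinsupp_singleton]

variable {W : Type*} [AddCommGroup W] [Module ℂ W] {n : ℕ}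

theorem exists_linear (b : Module.Basis (Fin n) ℂ W) (i₀ : Fin n) (L : MvPolynomial (Fin n) ℂ)
    (hL : L.IsHomogeneous 1) :
    ∃ lam : W →ₗ[ℂ] ℂ, ∀ w : W, eval (b.equivFun w) L = lam w := by
  classical
  have hstr : ∀ d ∈ L.support, ∃ a : Fin n, d = Finsupp.single a 1 := by
    intro d hd
    apply degree_structure_one'
    by_contra h
    exact mem_support_iff.mp hd (hL.coeff_eq_zero h)
  set pick : (Fin n →₀ ℕ) → Fin n := fun d =>
    if h : ∃ a : Fin n, d = Finsupp.single a 1 then h.choose else i₀ with hpick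
  have hpickspec : ∀ d ∈ L.support, d = Finsupp.single (pick d) 1 := by
    intro d hd
    have hex := hstr d hd
    rw [hpick]
    simp only [dif_pos hex]
    exact hex.choose_spec
  refine ⟨∑ d ∈ L.support, (coeff d L) • (b.coord (pick d)), ?_⟩
  intro w
  conv_lhs => rw [← support_sum_monomial_coeff L]
  rw [map_sum, LinearMap.sum_apply]
  apply Finset.sum_congr rfl
  intro d hd
  rw [eval_monomial]
  have hprod : (d.prod fun i k => (b.equivFun w) i ^ k) = (b.equivFun w) (pick d) := by
    conv_lhs => rw [hpickspec d hd]
    rw [prod_single_one']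
  rw [hprod]
  simp [Module.Basis.equivFun_apply, Module.Basis.coord_apply, smul_eq_mul]

theorem exists_bilinear (b : Module.Basis (Fin n) ℂ W) (i₀ : Fin n) (K : MvPolynomial (Fin n) ℂ)
    (hK : K.IsHomogeneous 2) :
    ∃ B : W →ₗ[ℂ] W →ₗ[ℂ] ℂ, (∀ u v : W, B u v = B v u) ∧
      ∀ w : W, eval (b.equivFun w) K = B w w := by
  classical
  have hstr : ∀ d ∈ K.support, ∃ a c : Fin n,
      d = Finsupp.single a 1 + Finsupp.single c 1 := by
    intro d hd
    apply degree_structure_two'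
    by_contra h
    exact mem_support_iff.mp hd (hK.coeff_eq_zero h)
  set pick : (Fin n →₀ ℕ) → Fin n × Fin n := fun d =>
    if h : ∃ a c : Fin n, d = Finsupp.single a 1 + Finsupp.single c 1 then
      (h.choose, h.choose_spec.choose) else (i₀, i₀) with hpick
  have hpickspec : ∀ d ∈ K.support,
      d = Finsupp.single (pick d).1 1 + Finsupp.single (pick d).2 1 := by
    intro d hd
    have hex := hstr d hd
    rw [hpick]
    simp only [dif_pos hex]
    exact hex.choose_spec.choose_spec
  refine ⟨∑ d ∈ K.support, ((coeff d K)/2) •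
      ((b.coord (pick d).1).smulRight (b.coord (pick d).2)
        + (b.coord (pick d).2).smulRight (b.coord (pick d).1)), ?_, ?_⟩
  · intro u v
    simp only [LinearMap.sum_apply, LinearMap.smul_apply, LinearMap.add_apply,
      LinearMap.smulRight_apply, smul_eq_mul, Module.Basis.coord_apply]
    apply Finset.sum_congr rfl
    intro d _
    ring
  · intro w
    conv_lhs => rw [← support_sum_monomial_coeff K]
    rw [map_sum, LinearMap.sum_apply, LinearMap.sum_apply]
    apply Finset.sum_congr rfl
    intro d hd
    rw [eval_monomial]
    have hprod : (d.prod fun i k => (b.equivFun w) i ^ k)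
        = (b.equivFun w) (pick d).1 * (b.equivFun w) (pick d).2 := by
      conv_lhs => rw [hpickspec d hd]
      rw [prod_pair']
    rw [hprod]
    simp only [LinearMap.smul_apply, LinearMap.add_apply, LinearMap.smulRight_apply,
      smul_eq_mul, Module.Basis.coord_apply, Module.Basis.equivFun_apply]
    ring

end GaussAux
/-- If `f` is irreducible and admits a nonzero prolongation `A`,
then there is a smooth point `w ∈ Ŷ` (i.e. `f(w,w,w) = 0`, `f_{ww} ≠ 0`) whose
Gauss space `Γ_w` strictly contains the line `ℂ·w`; i.e. the Gauss map of `Y`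
is degenerate. -/
theorem gauss_map_degenerate_of_prolongation
    {W : Type*} [AddCommGroup W] [Module ℂ W] [FiniteDimensional ℂ W]
    (f : W →ₗ[ℂ] W →ₗ[ℂ] W →ₗ[ℂ] ℂ)
    (hsym1 : ∀ u v w : W, f u v w = f v u w)
    (hsym2 : ∀ u v w : W, f u v w = f u w v)
    (hf : f ≠ 0)
    (hirr : ¬ ∃ (lam : W →ₗ[ℂ] ℂ) (B : W →ₗ[ℂ] W →ₗ[ℂ] ℂ),
      lam ≠ 0 ∧ B ≠ 0 ∧ (∀ u v : W, B u v = B v u) ∧ ∀ w : W, f w w w = lam w * B w w)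
    (A : W →ₗ[ℂ] W →ₗ[ℂ] W) (hA0 : A ≠ 0) (hAsym : ∀ u v : W, A u v = A v u)
    (χ : W →ₗ[ℂ] ℂ)
    (hA : ∀ s u v w : W,
      f (A w u) v s + f u (A w v) s + f u v (A w s) = χ w * f u v s) :
    ∃ w : W, f w w w = 0 ∧ f w w ≠ 0 ∧
      ∃ v : W, (∃ c : ℂ, f v w = c • f w w) ∧ v ∉ Submodule.span ℂ ({w} : Set W) := by
  classical
  by_contra hcon
  push_neg at hcon
  have hfdiag : ¬ (∀ w : W, f w w w = 0) := fun h =>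
    hf (GaussAux.trilinear_eq_zero_of_diag f hsym1 hsym2 h)
  -- Step A : 3 f(w,w,A w x) = χ(x) f(w,w,w)
  have hA1 : ∀ w x : W, 3 * f w w (A w x) = χ x * f w w w := by
    intro w x
    have h := hA w w w x
    rw [show f (A x w) w w = f w w (A x w) by rw [hsym1, hsym2],
        show f w (A x w) w = f w w (A x w) by rw [hsym2]] at h
    rw [hAsym w x]
    linear_combination h
  -- Step C : at smooth points of the cone, A w w is proportional to w
  have hsmooth : ∀ w : W, f w w w = 0 → f w w ≠ 0 → ∃ a : ℂ, A w w = a • w := by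
    intro w hw hne
    have hv : ∃ c : ℂ, f (A w w) w = c • f w w := by
      refine ⟨χ w / 2, ?_⟩
      ext s
      simp only [LinearMap.smul_apply, smul_eq_mul]
      have h := hA s w w w
      rw [show f w (A w w) s = f (A w w) w s from (hsym1 _ _ _).symm] at h
      have h3 := hA1 w s
      rw [hw, mul_zero] at h3
      linear_combination h / 2 - h3 / 6
    have hmem := hcon w hw hne (A w w) hv
    obtain ⟨a, ha⟩ := Submodule.mem_span_singleton.mp hmem
    exact ⟨a, ha.symm⟩
  -- basis and coordinates
  set n := Module.finrank ℂ W with hn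
  set b : Module.Basis (Fin n) ℂ W := Module.finBasis ℂ W with hb
  have hsurj : ∀ x : Fin n → ℂ, ∃ w : W, b.equivFun w = x := fun x =>
    ⟨b.equivFun.symm x, b.equivFun.apply_symm_apply x⟩
  -- dimension at least 3
  have hn3 : 3 ≤ n := by
    by_contra hlt
    push_neg at hlt
    have hcases : Module.finrank ℂ W = 0 ∨ Module.finrank ℂ W = 1 ∨ Module.finrank ℂ W = 2 := by
      omega
    rcases hcases with h0 | h1 | h2
    · haveI : Subsingleton W := Module.finrank_zero_iff.mp h0
      apply hf
      apply LinearMap.ext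
      intro u
      rw [Subsingleton.elim u 0, map_zero]
      rfl
    · set b1 : Module.Basis (Fin 1) ℂ W := Module.finBasisOfFinrankEq ℂ W h1 with hb1
      set e : W := b1 0 with he
      have hw1 : ∀ w : W, w = b1.repr w 0 • e := by
        intro w
        conv_lhs => rw [← b1.sum_repr w]
        rw [Fin.sum_univ_one]
      set cc : ℂ := f e e e with hcc
      have hcne : cc ≠ 0 := by
        intro h0
        apply hfdiag
        intro w
        conv_lhs => rw [hw1 w]
        simp only [map_smul, LinearMap.smul_apply, smul_eq_mul]
        rw [← hcc, h0]
        ring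
      apply hirr
      have hee : b1.coord 0 e = 1 := by
        rw [he, Module.Basis.coord_apply, Module.Basis.repr_self]
        simp
      refine ⟨b1.coord 0, cc • ((b1.coord 0).smulRight (b1.coord 0)), ?_, ?_, ?_, ?_⟩
      · intro h0
        have h1e := LinearMap.congr_fun h0 e
        rw [hee] at h1e
        simp at h1e
      · intro h0
        have h1e := LinearMap.congr_fun (LinearMap.congr_fun h0 e) e
        simp only [LinearMap.smul_apply, LinearMap.smulRight_apply, smul_eq_mul,
          LinearMap.zero_apply, hee] at h1e
        rw [mul_one, mul_one] at h1e
        exact hcne h1e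
      · intro u v
        simp only [LinearMap.smul_apply, LinearMap.smulRight_apply, smul_eq_mul]
        ring
      · intro w
        conv_lhs => rw [hw1 w]
        simp only [map_smul, LinearMap.smul_apply, LinearMap.smulRight_apply, smul_eq_mul]
        rw [show (f e) e e = cc from rfl]
        have hcw : b1.coord 0 w = b1.repr w 0 := Module.Basis.coord_apply b1 0 w
        rw [hcw]
        ring
    · set b2 : Module.Basis (Fin 2) ℂ W := Module.finBasisOfFinrankEq ℂ W h2 with hb2
      have hu : ∃ u : W, u ≠ 0 ∧ f u u u = 0 := by
        by_cases hc3 : f (b2 1) (b2 1) (b2 1) = 0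
        · exact ⟨b2 1, b2.ne_zero 1, hc3⟩
        · set e0 : W := b2 0 with he0
          set e1 : W := b2 1 with he1
          set p : Polynomial ℂ := Polynomial.C (f e1 e1 e1) * Polynomial.X ^ 3
            + Polynomial.C (3 * f e0 e1 e1) * Polynomial.X ^ 2
            + Polynomial.C (3 * f e0 e0 e1) * Polynomial.X + Polynomial.C (f e0 e0 e0) with hp
          have hdeg : 0 < p.degree := by
            rw [hp, Polynomial.degree_cubic hc3]
            norm_num
          obtain ⟨r, hr⟩ := Complex.exists_root hdeg
          have hr' : f e1 e1 e1 * r ^ 3 + 3 * f e0 e1 e1 * r ^ 2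
              + 3 * f e0 e0 e1 * r + f e0 e0 e0 = 0 := by
            have heval := hr
            rw [Polynomial.IsRoot, hp] at heval
            simp only [Polynomial.eval_add, Polynomial.eval_mul, Polynomial.eval_pow,
              Polynomial.eval_C, Polynomial.eval_X] at heval
            linear_combination heval
          refine ⟨e0 + r • e1, ?_, ?_⟩
          · intro h0
            have hco := congrArg (fun w => b2.repr w 0) h0
            simp only [map_add, map_smul, Finsupp.add_apply, Finsupp.smul_apply,
              smul_eq_mul, map_zero, Finsupp.coe_zero, Pi.zero_apply] at hco
            rw [he0, he1, Module.Basis.repr_self, Module.Basis.repr_self] at hco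
            simp at hco
          · have pa : f e1 e0 e0 = f e0 e0 e1 := by rw [hsym1, hsym2]
            have pb : f e0 e1 e0 = f e0 e0 e1 := by rw [hsym2]
            have pc : f e1 e1 e0 = f e0 e1 e1 := by rw [hsym2, hsym1]
            have pd : f e1 e0 e1 = f e0 e1 e1 := by rw [hsym1]
            simp only [map_add, map_smul, LinearMap.add_apply, LinearMap.smul_apply,
              smul_eq_mul]
            rw [pa, pb, pc, pd]
            linear_combination hr'
      obtain ⟨u, hu0, huuu⟩ := hu
      have hv' : ∃ v' : W, v' ∉ Submodule.span ℂ ({u} : Set W) := by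
        by_contra h
        push_neg at h
        have htop : Submodule.span ℂ ({u} : Set W) = ⊤ := by
          rw [Submodule.eq_top_iff']
          exact h
        have h1' := finrank_span_singleton (K := ℂ) hu0
        rw [htop, finrank_top] at h1'
        omega
      obtain ⟨v', hv'⟩ := hv'
      have hli : LinearIndependent ℂ ![v', u] := by
        rw [linearIndependent_fin2]
        refine ⟨by simpa using hu0, ?_⟩
        intro a ha
        exact hv' (Submodule.mem_span_singleton.mpr ⟨a, by simpa using ha⟩)
      have hcard : Fintype.card (Fin 2) = Module.finrank ℂ W := by
        rw [h2, Fintype.card_fin]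
      set b' : Module.Basis (Fin 2) ℂ W := basisOfLinearIndependentOfCardEqFinrank hli hcard with hb'
      have hb'0 : b' 0 = v' := by
        rw [hb', coe_basisOfLinearIndependentOfCardEqFinrank]
        rfl
      have hb'1 : b' 1 = u := by
        rw [hb', coe_basisOfLinearIndependentOfCardEqFinrank]
        rfl
      set β : W →ₗ[ℂ] ℂ := b'.coord 0 with hβ
      set α : W →ₗ[ℂ] ℂ := b'.coord 1 with hα
      set B : W →ₗ[ℂ] W →ₗ[ℂ] ℂ :=
        (f v' v' v') • (β.smulRight β)
        + ((3 : ℂ)/2 * f u v' v') • (β.smulRight α + α.smulRight β)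
        + ((3 : ℂ) * f u u v') • (α.smulRight α) with hB
      have hBval : ∀ w : W, B w w = f v' v' v' * (β w * β w)
          + 3 * f u v' v' * (β w * α w) + 3 * f u u v' * (α w * α w) := by
        intro w
        rw [hB]
        simp only [LinearMap.add_apply, LinearMap.smul_apply, LinearMap.smulRight_apply,
          smul_eq_mul]
        ring
      have hw2 : ∀ w : W, w = β w • v' + α w • u := by
        intro w
        conv_lhs => rw [← b'.sum_repr w]
        rw [Fin.sum_univ_two, hb'0, hb'1, hβ, hα, Module.Basis.coord_apply, Module.Basis.coord_apply]
      have hId : ∀ w : W, f w w w = β w * B w w := by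
        intro w
        conv_lhs => rw [hw2 w]
        have pa : f u v' v' = f u v' v' := rfl
        have p1 : f v' v' u = f u v' v' := by rw [hsym2, hsym1]
        have p2 : f v' u v' = f u v' v' := by rw [hsym1]
        have p3 : f v' u u = f u u v' := by rw [hsym1, hsym2]
        have p4 : f u v' u = f u u v' := by rw [hsym2]
        simp only [map_add, map_smul, LinearMap.add_apply, LinearMap.smul_apply, smul_eq_mul]
        rw [p1, p2, p3, p4, huuu, hBval w]
        ring
      apply hirr
      refine ⟨β, B, ?_, ?_, ?_, hId⟩
      · intro h0
        have h1e := LinearMap.congr_fun h0 v'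
        rw [hβ, ← hb'0, Module.Basis.coord_apply, Module.Basis.repr_self] at h1e
        simp at h1e
      · intro h0
        apply hfdiag
        intro w
        rw [hId w, h0]
        simp
      · intro uu vv
        rw [hB]
        simp only [LinearMap.add_apply, LinearMap.smul_apply, LinearMap.smulRight_apply,
          smul_eq_mul]
        ring
  have hne0 : (0 : ℕ) < n := by omega
  set i₀ : Fin n := ⟨0, hne0⟩ with hi₀
  -- bilinear auxiliary maps
  set Fb : W → (W →ₗ[ℂ] W →ₗ[ℂ] ℂ) := fun s => f.compr₂ (LinearMap.applyₗ s) with hFbdef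
  have hFb_apply : ∀ s u v : W, Fb s u v = f u v s := fun s u v => rfl
  have hFb_symm : ∀ s u v : W, Fb s u v = Fb s v u := fun s u v => hsym1 u v s
  set Qb : Fin n → (W →ₗ[ℂ] W →ₗ[ℂ] ℂ) := fun i => A.compr₂ (b.coord i) with hQbdef
  have hQb_apply : ∀ (i : Fin n) (u v : W), Qb i u v = b.repr (A u v) i := fun i u v => rfl
  have hQb_symm : ∀ (i : Fin n) (u v : W), Qb i u v = Qb i v u := by
    intro i u v
    rw [hQb_apply, hQb_apply, hAsym]
  -- polynomials
  set G : MvPolynomial (Fin n) ℂ :=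
    GaussAux.pol3 (fun i j k => f (b i) (b j) (b k)) with hGdef
  have hGhom : G.IsHomogeneous 3 := GaussAux.pol3_isHomogeneous _
  have hGeval : ∀ w : W, eval (b.equivFun w) G = f w w w :=
    GaussAux.eval_pol3 b f hsym1 hsym2
  set Fp : W → MvPolynomial (Fin n) ℂ :=
    fun s => GaussAux.pol2 (fun i j => Fb s (b i) (b j)) with hFpdef
  have hFphom : ∀ s, (Fp s).IsHomogeneous 2 := fun s => GaussAux.pol2_isHomogeneous _
  have hFpeval : ∀ (s : W) (w : W), eval (b.equivFun w) (Fp s) = f w w s := fun s w => by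
    have := GaussAux.eval_pol2 b (Fb s) (hFb_symm s) w
    rwa [hFb_apply] at this
  set Qp : Fin n → MvPolynomial (Fin n) ℂ :=
    fun i => GaussAux.pol2 (fun p q => Qb i (b p) (b q)) with hQpdef
  have hQpeval : ∀ (i : Fin n) (w : W), eval (b.equivFun w) (Qp i) = b.repr (A w w) i :=
    fun i w => by
      have := GaussAux.eval_pol2 b (Qb i) (hQb_symm i) w
      rwa [hQb_apply] at this
  set Dp : Fin n → Fin n → MvPolynomial (Fin n) ℂ :=
    fun i j => Qp i * X j - Qp j * X i with hDpdef
  have hDphom : ∀ i j, (Dp i j).IsHomogeneous 3 := by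
    intro i j
    apply MvPolynomial.IsHomogeneous.sub
    · exact (GaussAux.pol2_isHomogeneous _).mul (isHomogeneous_X _ _)
    · exact (GaussAux.pol2_isHomogeneous _).mul (isHomogeneous_X _ _)
  have hDpeval : ∀ (i j : Fin n) (w : W), eval (b.equivFun w) (Dp i j) =
      b.repr (A w w) i * b.repr w j - b.repr (A w w) j * b.repr w i := by
    intro i j w
    rw [hDpdef]
    simp only [map_sub, map_mul, eval_X]
    rw [hQpeval, hQpeval]
    simp [Module.Basis.equivFun_apply]
  -- G is nonzero
  have hG0 : G ≠ 0 := by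
    intro h
    apply hfdiag
    intro w
    rw [← hGeval w, h, map_zero]
  -- G is irreducible
  have hGirr : Irreducible G := by
    constructor
    · intro hU
      have h0 : constantCoeff G = 0 := by
        rw [constantCoeff_eq]
        exact hGhom.coeff_eq_zero (d := 0) (by simp [Finsupp.degree])
      have hmap := hU.map (constantCoeff : MvPolynomial (Fin n) ℂ →+* ℂ)
      rw [h0] at hmap
      exact not_isUnit_zero hmap
    · intro P Q hPQ
      by_contra hU
      push_neg at hU
      obtain ⟨da, db, hPH, hQH, ha1, hb1, hab⟩ :=
        GaussAux.homog_factors hGhom hG0 hPQ hU.1 hU.2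
      have hLK : ∃ L K : MvPolynomial (Fin n) ℂ,
          L.IsHomogeneous 1 ∧ K.IsHomogeneous 2 ∧ G = L * K := by
        rcases (by omega : da = 1 ∧ db = 2 ∨ da = 2 ∧ db = 1) with ⟨h1, h2⟩ | ⟨h1, h2⟩
        · exact ⟨P, Q, h1 ▸ hPH, h2 ▸ hQH, hPQ⟩
        · exact ⟨Q, P, h2 ▸ hQH, h1 ▸ hPH, by rw [hPQ, mul_comm]⟩
      obtain ⟨L, K, hLH, hKH, hGLK⟩ := hLK
      obtain ⟨lam, hlam⟩ := GaussAux.exists_linear b i₀ L hLH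
      obtain ⟨B, hBsym, hBeval⟩ := GaussAux.exists_bilinear b i₀ K hKH
      apply hirr
      refine ⟨lam, B, ?_, ?_, hBsym, ?_⟩
      · intro h0
        have hL0 : L = 0 := by
          apply MvPolynomial.funext
          intro x
          obtain ⟨w, rfl⟩ := hsurj x
          rw [hlam w, h0, map_zero]
          rfl
        exact hG0 (by rw [hGLK, hL0, zero_mul])
      · intro h0
        have hK0 : K = 0 := by
          apply MvPolynomial.funext
          intro x
          obtain ⟨w, rfl⟩ := hsurj x
          rw [hBeval w, h0, map_zero]
          rfl
        exact hG0 (by rw [hGLK, hK0, mul_zero])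
      · intro w
        rw [← hGeval w, hGLK, map_mul, hlam, hBeval]
  have hGpr : Prime G := UniqueFactorizationMonoid.irreducible_iff_prime.mp hGirr
  -- a nonzero quadratic
  have hFk0 : ∃ k₀ : Fin n, Fp (b k₀) ≠ 0 := by
    by_contra h
    push_neg at h
    apply hfdiag
    intro w
    have hk : ∀ k : Fin n, f w w (b k) = 0 := by
      intro k
      rw [← hFpeval (b k) w, h k, map_zero]
    have hws : ∀ s : W, f w w s = 0 := by
      intro s
      conv_lhs => rw [← b.sum_repr s]
      rw [map_sum]
      apply Finset.sum_eq_zero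
      intro k _
      rw [map_smul, smul_eq_mul, hk, mul_zero]
    exact hws w
  obtain ⟨k₀, hFk0⟩ := hFk0
  -- main divisibility via the Nullstellensatz
  have hdvd : ∀ i j : Fin n, G ∣ Dp i j * Fp (b k₀) := by
    intro i j
    rw [← Ideal.mem_span_singleton]
    have hprime : (Ideal.span {G}).IsPrime := (Ideal.span_singleton_prime hG0).mpr hGpr
    rw [← hprime.radical, ← vanishingIdeal_zeroLocus_eq_radical (K := ℂ)]
    intro x hx
    obtain ⟨w, rfl⟩ := hsurj x
    have hg : f w w w = 0 := by
      rw [← hGeval w]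
      exact hx G (Ideal.subset_span rfl)
    change eval (b.equivFun w) (Dp i j * Fp (b k₀)) = 0
    rw [map_mul]
    by_cases hww : f w w = 0
    · rw [hFpeval]
      have hz : f w w (b k₀) = 0 := by rw [hww]; rfl
      rw [hz, mul_zero]
    · obtain ⟨a, ha⟩ := hsmooth w hg hww
      rw [hDpeval, ha]
      simp only [map_smul, Finsupp.smul_apply, smul_eq_mul]
      ring
  have hconst : ∀ i j : Fin n, ∃ c : ℂ, Dp i j = C c * G := by
    intro i j
    rcases hGpr.2.2 _ _ (hdvd i j) with hD | hF
    · obtain ⟨t, ht⟩ := hD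
      refine ⟨coeff 0 t, ?_⟩
      have h1 : homogeneousComponent 3 (Dp i j) = Dp i j :=
        homogeneousComponent_of_mem ((mem_homogeneousSubmodule _ _).mpr (hDphom i j)) |>.trans
          (if_pos rfl)
      have h2 := GaussAux.hc_mul_homog G t (m := 3) hGhom
      rw [if_pos (by norm_num)] at h2
      rw [← h1, ht, h2]
      norm_num [homogeneousComponent_zero]
      ring
    · exfalso
      obtain ⟨t, ht⟩ := hF
      have h1 : homogeneousComponent 2 (Fp (b k₀)) = Fp (b k₀) :=
        homogeneousComponent_of_mem
          ((mem_homogeneousSubmodule _ _).mpr (hFphom (b k₀))) |>.trans (if_pos rfl)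
      have h2 := GaussAux.hc_mul_homog G t (m := 2) hGhom
      rw [if_neg (by norm_num)] at h2
      apply hFk0
      rw [← h1, ht, h2]
  choose c hc using hconst
  by_cases hcz : ∀ i j : Fin n, c i j = 0
  · -- case ω = 0 : A w w is everywhere proportional to w
    have hDz : ∀ i j : Fin n, Dp i j = 0 := by
      intro i j
      rw [hc i j, hcz i j, map_zero, zero_mul]
    have hprop : ∀ w : W, w ≠ 0 → ∃ a : ℂ, A w w = a • w := by
      intro w hw
      have hco : ∀ i j : Fin n, b.repr (A w w) i * b.repr w j
          = b.repr (A w w) j * b.repr w i := by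
        intro i j
        have h := congrArg (eval (b.equivFun w)) (hDz i j)
        rw [hDpeval, map_zero] at h
        linear_combination h
      have hj : ∃ j₀ : Fin n, b.repr w j₀ ≠ 0 := by
        by_contra h
        push_neg at h
        apply hw
        apply b.ext_elem
        intro i
        rw [h i, map_zero]
        rfl
      obtain ⟨j₀, hj₀⟩ := hj
      refine ⟨b.repr (A w w) j₀ / b.repr w j₀, ?_⟩
      apply b.ext_elem
      intro i
      rw [map_smul, Finsupp.smul_apply, smul_eq_mul]
      field_simp
      linear_combination hco i j₀
    by_cases hχ : χ = 0
    · -- χ = 0 : A vanishes identically, contradiction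
      have hQF : ∀ i : Fin n, Qp i * Fp (b k₀) = 0 := by
        intro i
        apply MvPolynomial.funext
        intro x
        obtain ⟨w, rfl⟩ := hsurj x
        rw [map_mul, hQpeval, hFpeval, map_zero]
        by_cases hw0 : w = 0
        · subst hw0
          simp
        · obtain ⟨a, ha⟩ := hprop w hw0
          have hkey : 2 * (a * f w w (b k₀)) = 0 := by
            have h := hA (b k₀) w w w
            rw [ha] at h
            have h3 := hA1 w (b k₀)
            have e1 : f ((a : ℂ) • w) w (b k₀) = a * f w w (b k₀) := by
              rw [map_smul]
              simp
            have e2 : f w ((a : ℂ) • w) (b k₀) = a * f w w (b k₀) := by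
              rw [map_smul]
              simp
            rw [e1, e2] at h
            rw [hχ] at h h3
            simp only [LinearMap.zero_apply, zero_mul] at h h3
            linear_combination h - h3 / 3
          by_cases haz : a = 0
          · rw [ha, haz, zero_smul, map_zero]
            simp
          · have hz : f w w (b k₀) = 0 := by
              rcases mul_eq_zero.mp hkey with h' | h'
              · exact absurd h' (by norm_num)
              · rcases mul_eq_zero.mp h' with h'' | h''
                · exact absurd h'' haz
                · exact h''
            rw [hz, mul_zero]
      have hQz : ∀ i : Fin n, Qp i = 0 := by
        intro i
        rcases mul_eq_zero.mp (hQF i) with h | h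
        · exact h
        · exact absurd h hFk0
      have hAz : ∀ w : W, A w w = 0 := by
        intro w
        apply b.ext_elem
        intro i
        rw [← hQpeval i w, hQz i, map_zero, map_zero]
        rfl
      exact hA0 (GaussAux.bilinear_eq_zero_of_diag A hAsym hAz)
    · -- χ ≠ 0 : f is divisible by χ, contradiction with irreducibility
      obtain ⟨s₀, hs₀⟩ := DFunLike.ne_iff.mp hχ
      have hχs₀ : χ s₀ ≠ 0 := by simpa using hs₀
      have hkeyP : ∀ k : Fin n, (Fp (b k) * C (χ s₀) - Fp s₀ * C (χ (b k))) * G = 0 := by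
        intro k
        apply MvPolynomial.funext
        intro x
        obtain ⟨w, rfl⟩ := hsurj x
        rw [map_zero, map_mul, map_sub, map_mul, map_mul, eval_C, eval_C, hFpeval, hFpeval,
          hGeval]
        by_cases hg : f w w w = 0
        · rw [hg, mul_zero]
        · have hw0 : w ≠ 0 := by
            intro h0
            apply hg
            rw [h0]
            simp
          obtain ⟨a, ha⟩ := hprop w hw0
          have hkey : ∀ s : W, (χ w - 2 * a) * f w w s = χ s * f w w w / 3 := by
            intro s
            have h := hA s w w w
            rw [ha] at h
            have h3 := hA1 w s
            have e1 : f ((a : ℂ) • w) w s = a * f w w s := by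
              rw [map_smul]
              simp
            have e2 : f w ((a : ℂ) • w) s = a * f w w s := by
              rw [map_smul]
              simp
            rw [e1, e2] at h
            linear_combination h3 / 3 - h
          have htne : χ w - 2 * a ≠ 0 := by
            intro h0
            have := hkey s₀
            rw [h0, zero_mul] at this
            have : χ s₀ * f w w w = 0 := by linear_combination -3 * this
            rcases mul_eq_zero.mp this with h | h
            · exact hχs₀ h
            · exact hg h
          have e1 := hkey (b k)
          have e2 := hkey s₀
          have hmain : f w w (b k) * χ s₀ - f w w s₀ * χ (b k) = 0 := by
            have hcomb : (χ w - 2 * a) * (f w w (b k) * χ s₀ - f w w s₀ * χ (b k)) = 0 := by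
              linear_combination χ s₀ * e1 - χ (b k) * e2
            rcases mul_eq_zero.mp hcomb with h | h
            · exact absurd h htne
            · exact h
          rw [hmain, zero_mul]
      have hkey2 : ∀ k : Fin n, Fp (b k) * C (χ s₀) = Fp s₀ * C (χ (b k)) := by
        intro k
        have h := hkeyP k
        rcases mul_eq_zero.mp h with h | h
        · exact sub_eq_zero.mp h
        · exact absurd h hG0
      have hpt : ∀ w s : W, f w w s * χ s₀ = f w w s₀ * χ s := by
        intro w s
        have hk : ∀ k : Fin n, f w w (b k) * χ s₀ = f w w s₀ * χ (b k) := by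
          intro k
          have h := congrArg (eval (b.equivFun w)) (hkey2 k)
          rw [map_mul, map_mul, eval_C, eval_C, hFpeval, hFpeval] at h
          exact h
        conv_lhs => rw [← b.sum_repr s]
        conv_rhs => rw [← b.sum_repr s]
        rw [map_sum, map_sum, Finset.sum_mul, Finset.mul_sum]
        apply Finset.sum_congr rfl
        intro k _
        rw [map_smul, map_smul, smul_eq_mul, smul_eq_mul]
        rw [mul_assoc, hk k]
        ring
      apply hirr
      refine ⟨χ, (χ s₀)⁻¹ • (Fb s₀), hχ, ?_, ?_, ?_⟩
      · intro hB
        apply hfdiag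
        intro w
        have hFb0 : Fb s₀ = 0 := by
          rcases smul_eq_zero.mp hB with h | h
          · exact absurd h (inv_ne_zero hχs₀)
          · exact h
        have : f w w s₀ = 0 := by
          rw [← hFb_apply s₀ w w, hFb0]
          rfl
        have h2 := hpt w w
        rw [this, zero_mul] at h2
        rcases mul_eq_zero.mp h2 with h | h
        · exact h
        · exact absurd h hχs₀
      · intro u v
        simp only [LinearMap.smul_apply, smul_eq_mul]
        rw [hFb_apply, hFb_apply, hsym1 u v s₀]
      · intro w
        simp only [LinearMap.smul_apply, smul_eq_mul]
        rw [hFb_apply]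
        have h2 := hpt w w
        field_simp
        linear_combination h2
  · -- case ω ≠ 0 : contradiction using dim ≥ 3
    push_neg at hcz
    obtain ⟨I, J, hIJ⟩ := hcz
    have hE : ∀ i j k : Fin n,
        (C (c i j) * X k + C (c j k) * X i + C (c k i) * X j) * G = 0 := by
      intro i j k
      have hzero : Dp i j * X k + Dp j k * X i + Dp k i * X j = 0 := by
        rw [hDpdef]
        ring
      calc (C (c i j) * X k + C (c j k) * X i + C (c k i) * X j) * G
          = Dp i j * X k + Dp j k * X i + Dp k i * X j := by
            rw [hc i j, hc j k, hc k i]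
            ring
        _ = 0 := hzero
    have hE2 : ∀ i j k : Fin n, C (c i j) * X k + C (c j k) * X i + C (c k i) * X j = 0 := by
      intro i j k
      rcases mul_eq_zero.mp (hE i j k) with h | h
      · exact h
      · exact absurd h hG0
    have hK : ∃ k : Fin n, k ≠ I ∧ k ≠ J := by
      by_contra h
      push_neg at h
      have hsub : (Finset.univ : Finset (Fin n)) ⊆ {I, J} := by
        intro k _
        rcases Classical.em (k = I) with h1 | h1
        · simp [h1]
        · simp [h k h1]
      have hcard := Finset.card_le_card hsub
      rw [Finset.card_univ, Fintype.card_fin] at hcard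
      have : ({I, J} : Finset (Fin n)).card ≤ 2 := by
        apply le_trans (Finset.card_insert_le _ _)
        simp
      omega
    obtain ⟨k, hkI, hkJ⟩ := hK
    have h := congrArg (eval (fun i : Fin n => if i = k then (1 : ℂ) else 0)) (hE2 I J k)
    rw [map_zero, map_add, map_add, map_mul, map_mul, map_mul, eval_C, eval_C, eval_C,
      eval_X, eval_X, eval_X] at h
    rw [if_pos rfl, if_neg (Ne.symm hkI), if_neg (Ne.symm hkJ)] at h
    apply hIJ
    linear_combination h
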